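/- If (b_0, …, b_m) is a strictly descending sequence in B_3^+ (b_0 > b_1 > ⋯ > b_m in the braid order) such that ‖b_t‖ ≤ k holds for every t ≤ m, then m < 2^{3k+1}. -/

import Mathlib

namespace Braid3

/-! ### The positive 3-strand braid monoid
presented by σ1, σ2 (letters `0`, `1` of `Fin 2`) with the relation σ1σ2σ1 = σ2σ1σ2. -/

def braidRel : FreeMonoid (Fin 2) → FreeMonoid (Fin 2) → Prop := fun u v =>
  u = FreeMonoid.of 0 * FreeMonoid.of 1 * FreeMonoid.of 0 ∧
  v = FreeMonoid.of 1 * FreeMonoid.of 0 * FreeMonoid.of 1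

def braidCon : Con (FreeMonoid (Fin 2)) := conGen braidRel

/-- The positive 3-strand braid monoid `B₃⁺`. -/
abbrev B3P := braidCon.Quotient

/-- The element of `B₃⁺` represented by a word on the alphabet {σ1, σ2}. -/
def mkw (w : List (Fin 2)) : B3P := braidCon.mk' (FreeMonoid.ofList w)

/-- σ1 as an element of B₃⁺. -/
def s1 : B3P := mkw [0]
/-- σ2 as an element of B₃⁺. -/
def s2 : B3P := mkw [1]
/-- Garside's fundamental braid Δ₃ = σ1σ2σ1. -/
def Δ : B3P := mkw [0, 1, 0]

/-! ### The 3-strand braid group B₃, with the same presentation. -/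

def grpRels : Set (FreeGroup (Fin 2)) :=
  { FreeGroup.of 0 * FreeGroup.of 1 * FreeGroup.of 0 *
    (FreeGroup.of 1 * FreeGroup.of 0 * FreeGroup.of 1)⁻¹ }

abbrev B3 := PresentedGroup grpRels

def g (i : Fin 2) : B3 := PresentedGroup.of i

theorem grp_braid_rel : g 0 * g 1 * g 0 = g 1 * g 0 * g 1 := by
  show (QuotientGroup.mk (FreeGroup.of 0 * FreeGroup.of 1 * FreeGroup.of 0) : B3)
      = QuotientGroup.mk (FreeGroup.of 1 * FreeGroup.of 0 * FreeGroup.of 1)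
  rw [QuotientGroup.eq]
  have h : (FreeGroup.of 0 * FreeGroup.of 1 * FreeGroup.of 0 *
      (FreeGroup.of 1 * FreeGroup.of 0 * FreeGroup.of 1)⁻¹ : FreeGroup (Fin 2)) ∈
      Subgroup.normalClosure grpRels :=
    Subgroup.subset_normalClosure rfl
  have h2 := (Subgroup.normalClosure_normal (s := grpRels)).conj_mem _ h
      (FreeGroup.of 0 * FreeGroup.of 1 * FreeGroup.of 0)⁻¹
  simp only [inv_inv] at h2
  have h3 : ((FreeGroup.of 0 * FreeGroup.of 1 * FreeGroup.of 0 : FreeGroup (Fin 2)))⁻¹ *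
      (FreeGroup.of 0 * FreeGroup.of 1 * FreeGroup.of 0 *
        (FreeGroup.of 1 * FreeGroup.of 0 * FreeGroup.of 1)⁻¹) *
      (FreeGroup.of 0 * FreeGroup.of 1 * FreeGroup.of 0) =
      ((FreeGroup.of 0 * FreeGroup.of 1 * FreeGroup.of 0 : FreeGroup (Fin 2))⁻¹ *
        (FreeGroup.of 1 * FreeGroup.of 0 * FreeGroup.of 1))⁻¹ := by
    group
  rw [h3] at h2
  exact (Subgroup.inv_mem_iff _).mp h2

/-- The canonical embedding of B₃⁺ into B₃. -/
def ι : B3P →* B3 :=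
  Con.lift _ (FreeMonoid.lift fun i => g i) (by
    apply Con.conGen_le.mpr
    rintro u v ⟨hu, hv⟩
    subst hu; subst hv
    rw [Con.ker_rel]
    simp only [map_mul, FreeMonoid.lift_eval_of]
    exact grp_braid_rel)

/-! ### The braid order -/

/-- Evaluation in B₃ of a word on the letters σ1^{±1}, σ2^{±1}
(a letter `(i, true)` is σ_{i+1}, a letter `(i, false)` is σ_{i+1}⁻¹). -/
def evalSW (w : List (Fin 2 × Bool)) : B3 :=
  (w.map fun l => if l.2 then g l.1 else (g l.1)⁻¹).prod

/-- A signed word is σ-positive if the generator of highest occurring index occurs,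
and occurs only positively. -/
def SigmaPos (w : List (Fin 2 × Bool)) : Prop :=
  ∃ i : Fin 2, (i, true) ∈ w ∧ (i, false) ∉ w ∧ ∀ l ∈ w, l.1 ≤ i

/-- The braid order on the group B₃. -/
def gLt (a b : B3) : Prop := ∃ w, SigmaPos w ∧ evalSW w = a⁻¹ * b

/-- The braid order on B₃⁺. -/
def blt (a b : B3P) : Prop := gLt (ι a) (ι b)

def ble (a b : B3P) : Prop := blt a b ∨ a = b

/-! ### ϕ-normal words and exponent sequences -/

/-- The minimal legal sizes e_k^min. -/
def emin : ℕ → ℕ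
  | 1 => 0
  | 2 => 1
  | _ => 2

/-- The letter of the k-th block (1-based, from the right): σ1 for odd k, σ2 for even k. -/
def letterOf (k : ℕ) : Fin 2 := if k % 2 = 1 then 0 else 1

/-- The word σ_{[p]}^{e_p} ⋯ σ2^{e_2} σ1^{e_1} associated with the exponent
sequence `E = [e_p, …, e_1]`. -/
def wordOfExpSeq : List ℕ → List (Fin 2)
  | [] => []
  | e :: rest => List.replicate e (letterOf (rest.length + 1)) ++ wordOfExpSeq rest

/-- `expAt E k` is e_k, the k-th entry of the exponent sequence counted from the right,
1-based. -/
def expAt (E : List ℕ) (k : ℕ) : ℕ := E.getD (E.length - k) 0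

/-- `E = [e_p, …, e_1]` is the exponent sequence of a ϕ-normal word: the final block
decomposition is minimal (leading exponent nonzero) and e_k ≥ e_k^min for k < p. -/
def IsNormalSeq (E : List ℕ) : Prop :=
  E ≠ [] ∧ 1 ≤ expAt E E.length ∧ ∀ k, 1 ≤ k → k < E.length → emin k ≤ expAt E k

/-- A word on {σ1, σ2} is ϕ-normal if its (minimal) block decomposition
σ_{[p]}^{e_p} ⋯ σ2^{e_2} σ1^{e_1} satisfies e_k ≥ e_k^min for k < p. -/
def IsPhiNormalWord (w : List (Fin 2)) : Prop :=
  ∃ E, IsNormalSeq E ∧ w = wordOfExpSeq E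

/-- `E` is the exponent sequence of the braid `b`. -/
def HasExpSeq (b : B3P) (E : List ℕ) : Prop :=
  IsNormalSeq E ∧ mkw (wordOfExpSeq E) = b

/-- The exponent sequence of a (nontrivial) braid of B₃⁺. -/
noncomputable def expSeqOf (b : B3P) : List ℕ := by
  classical exact if h : ∃ E, HasExpSeq b E then h.choose else []

/-- The critical position of an exponent sequence: the least r < p with e_r > e_r^min
if it exists, and p otherwise. -/
noncomputable def critPos (E : List ℕ) : ℕ := by
  classical exact
    if h : ∃ r, 1 ≤ r ∧ r < E.length ∧ emin r < expAt E r then Nat.find h else E.length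

/-- The effect of the operation b ↦ b{t} on exponent sequences: remove one letter from
the critical block, and add t letters to the next block if the latter exists. -/
noncomputable def stepSeq (E : List ℕ) (t : ℕ) : List ℕ :=
  let p := E.length
  let r := critPos E
  let E1 := E.set (p - r) (expAt E r - 1)
  if 2 ≤ r then E1.set (p - (r - 1)) (expAt E (r - 1) + t) else E1

/-- The operation b ↦ b{t} of Definition 2.2 (with 1{t} = 1). -/
noncomputable def step (b : B3P) (t : ℕ) : B3P := by
  classical exact if b = 1 then 1 else mkw (wordOfExpSeq (stepSeq (expSeqOf b) t))

/-- The G₃-sequence from b: `gseq b 0 = b`, `gseq b t = (gseq b (t-1)){t}`. -/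
noncomputable def gseq (b : B3P) : ℕ → B3P
  | 0 => b
  | t + 1 => step (gseq b t) (t + 1)

/-- T(b): the length of the G₃-sequence from b, i.e. the least t with b{1}{2}⋯{t} = 1. -/
noncomputable def T (b : B3P) : ℕ := sInf {t | gseq b t = 1}

/-! ### The ordinal of a 3-braid, fundamental sequences, the Hardy hierarchy -/

open Ordinal in
/-- Sum Σ ω^{k-1}·(e_k − e_k^min) over the tail of an exponent sequence. -/
noncomputable def ordSeqAux : List ℕ → Ordinal
  | [] => 0
  | e :: rest =>
    omega0 ^ (rest.length : Ordinal) * ((e - emin (rest.length + 1) : ℕ) : Ordinal)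
      + ordSeqAux rest

open Ordinal in
/-- ord of an exponent sequence (e_p, …, e_1):
ω^{p−1}·e_p + Σ_{p>k≥1} ω^{k−1}·(e_k − e_k^min). -/
noncomputable def ordSeq : List ℕ → Ordinal
  | [] => 0
  | e :: rest => omega0 ^ (rest.length : Ordinal) * (e : Ordinal) + ordSeqAux rest

/-- The ordinal ord(b) < ω^ω attached to a braid of B₃⁺ (with ord(1) = 0). -/
noncomputable def ordOf (b : B3P) : Ordinal := ordSeq (expSeqOf b)

open Ordinal in
/-- Fundamental sequences: 0[x] = 0, (α+1)[x] = α, (γ + ω^{r+1})[x] = γ + ω^r·x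
(CNF decomposition), and (ω^ω)[x] = ω^x. -/
noncomputable def fundSeq (α : Ordinal) (x : ℕ) : Ordinal :=
  open scoped Classical in
  if α = 0 then 0
  else if h : ∃ β, α = β + 1 then h.choose
  else if α = omega0 ^ omega0 then omega0 ^ (x : Ordinal)
  else if h : ∃ p : Ordinal × ℕ, α = p.1 + omega0 ^ ((p.2 : Ordinal) + 1) ∧
      omega0 ^ ((p.2 : Ordinal) + 1) ∣ p.1
    then h.choose.1 + omega0 ^ (h.choose.2 : Ordinal) * (x : Ordinal)
  else 0

open Ordinal in
theorem fundSeq_lt (α : Ordinal) (x : ℕ) (h0 : ¬α = 0) (hs : ¬∃ β, α = β + 1) :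
    fundSeq α x < α := by
  classical
  rw [fundSeq]
  rw [if_neg h0, dif_neg hs]
  by_cases hw : α = omega0 ^ omega0
  · rw [if_pos hw, hw]
    exact (Ordinal.opow_lt_opow_iff_right Ordinal.one_lt_omega0).mpr (Ordinal.nat_lt_omega0 x)
  · rw [if_neg hw]
    by_cases hd : ∃ p : Ordinal × ℕ, α = p.1 + omega0 ^ ((p.2 : Ordinal) + 1) ∧
        omega0 ^ ((p.2 : Ordinal) + 1) ∣ p.1
    · rw [dif_pos hd]
      obtain ⟨hα, -⟩ := hd.choose_spec
      have hlt : omega0 ^ ((hd.choose.2 : Ordinal)) * (x : Ordinal)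
          < omega0 ^ ((hd.choose.2 : Ordinal) + 1) := by
        rw [Ordinal.add_one_eq_succ, Ordinal.opow_succ]
        exact (mul_lt_mul_iff_right₀
          (Ordinal.opow_pos _ Ordinal.omega0_pos)).mpr (Ordinal.nat_lt_omega0 x)
      calc hd.choose.1 + omega0 ^ (hd.choose.2 : Ordinal) * (x : Ordinal)
          < hd.choose.1 + omega0 ^ ((hd.choose.2 : Ordinal) + 1) :=
            (add_lt_add_iff_left _).mpr hlt
        _ = α := hα.symm
    · rw [dif_neg hd]
      exact pos_iff_ne_zero.mpr h0

open Ordinal in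
open scoped Classical in
/-- The Hardy hierarchy: H_0(x) = x, H_{α+1}(x) = H_α(x+1), H_λ(x) = H_{λ[x]}(x+1). -/
noncomputable def hardy (α : Ordinal) (x : ℕ) : ℕ :=
  if α = 0 then x
  else if h : ∃ β, α = β + 1 then hardy h.choose (x + 1)
  else hardy (fundSeq α x) (x + 1)
termination_by α
decreasing_by
  · have hs := h.choose_spec
    have h2 : h.choose < h.choose + 1 := by
      rw [Ordinal.add_one_eq_succ]; exact Order.lt_succ _
    exact lt_of_lt_of_eq h2 hs.symm
  · exact fundSeq_lt _ _ (by assumption) (by assumption)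

/-! ### Garside complexity -/

/-- The Garside complexity ‖b‖: the least ℓ such that b left-divides Δ₃^ℓ. -/
noncomputable def compl (b : B3P) : ℕ := sInf {ℓ | ∃ c, b * c = Δ ^ ℓ}



abbrev L3 := Fin 3 × Bool

def invL (x : L3) : L3 := (x.1, !x.2)

@[simp] lemma invL_invL (x : L3) : invL (invL x) = x := by simp [invL]

def letters : List L3 := [(0,true),(0,false),(1,true),(1,false),(2,true),(2,false)]

lemma letters_complete : ∀ x : L3, x ∈ letters := by
  rintro ⟨i, b⟩
  fin_cases i <;> cases b <;> simp [letters]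

def RedW (L : List L3) : Prop := List.IsChain (fun x y => y ≠ invL x) L

def redWb : List L3 → Bool
  | [] => true
  | [_] => true
  | x :: y :: t => (y != invL x) && redWb (y :: t)

lemma redW_iff (L : List L3) : RedW L ↔ redWb L = true := by
  induction L with
  | nil => simp [RedW, redWb]
  | cons x L ih =>
    cases L with
    | nil => simp [RedW, redWb]
    | cons y t =>
      simp only [redWb, Bool.and_eq_true, bne_iff_ne]
      rw [RedW, List.isChain_cons_cons]
      rw [RedW] at ih
      constructor
      · rintro ⟨h1, h2⟩; exact ⟨h1, ih.mp h2⟩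
      · rintro ⟨h1, h2⟩; exact ⟨h1, ih.mpr h2⟩

instance (L : List L3) : Decidable (RedW L) := decidable_of_iff _ (redW_iff L).symm

structure Subst where
  img : L3 → List L3
  spec : L3 → List (List L3)

def combine (u v : List L3) : List L3 :=
  match v with
  | [] => u
  | h :: t => if u.getLast? = some (invL h) then u.dropLast ++ t else u ++ v

@[simp] lemma combine_nil (u : List L3) : combine u [] = u := rfl

lemma combine_cons (u : List L3) (h : L3) (t : List L3) :
    combine u (h :: t) = if u.getLast? = some (invL h) then u.dropLast ++ t else u ++ (h :: t) :=
  rfl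

def run (S : Subst) : List L3 → List L3
  | [] => []
  | x :: L => combine (S.img x) (run S L)

def Safe (S : Subst) (y : L3) (h : L3) : Prop :=
  ∀ z ∈ letters, z ≠ invL y → (S.img z).getLast? ≠ some (invL h)

instance (S y h) : Decidable (Safe S y h) :=
  inferInstanceAs (Decidable (∀ z ∈ letters, z ≠ invL y → (S.img z).getLast? ≠ some (invL h)))

def specPre (S : Subst) (x : L3) (w : List L3) : Prop :=
  ∃ p ∈ S.spec x, p <+: w ∧ (2 ≤ p.length ∨ ∃ h, p = [h] ∧ Safe S x h)

instance (S x w) : Decidable (specPre S x w) :=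
  inferInstanceAs (Decidable (∃ p ∈ S.spec x, p <+: w ∧ (2 ≤ p.length ∨ ∃ h, p = [h] ∧ Safe S x h)))

def specOK (S : Subst) (x : L3) (w : List L3) : Prop :=
  w ∈ S.spec x ∨ specPre S x w

instance (S x w) : Decidable (specOK S x w) :=
  inferInstanceAs (Decidable (_ ∨ specPre S x w))

def Good (S : Subst) (y : L3) (v : List L3) : Prop :=
  RedW v ∧ v ≠ [] ∧ specOK S y v

def StepOK (S : Subst) (x : L3) (p : List L3) : Prop :=
  (RedW (combine (S.img x) p) ∧ combine (S.img x) p ≠ [] ∧ specOK S x (combine (S.img x) p)) ∧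
  (∀ h, p.head? = some h →
    if (S.img x).getLast? = some (invL h) then
      (p.tail ≠ [] → ((∀ l, ((S.img x).dropLast).getLast? = some l →
              ∀ h2, p.tail.head? = some h2 → h2 ≠ invL l) ∧
            specPre S x ((S.img x).dropLast ++ p.tail)))
    else specPre S x (S.img x ++ p))

instance (S x p) : Decidable (StepOK S x p) :=
  inferInstanceAs (Decidable ((RedW (combine (S.img x) p) ∧ combine (S.img x) p ≠ [] ∧
      specOK S x (combine (S.img x) p)) ∧
    (∀ h, p.head? = some h →
      if (S.img x).getLast? = some (invL h) then
        (p.tail ≠ [] → ((∀ l, ((S.img x).dropLast).getLast? = some l →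
                ∀ h2, p.tail.head? = some h2 → h2 ≠ invL l) ∧
              specPre S x ((S.img x).dropLast ++ p.tail)))
      else specPre S x (S.img x ++ p))))

def Hbase (S : Subst) : Prop :=
  ∀ x ∈ letters, RedW (S.img x) ∧ S.img x ≠ [] ∧ specOK S x (S.img x)

def Hstep (S : Subst) : Prop :=
  ∀ y ∈ letters, ∀ p ∈ S.spec y, ∀ x ∈ letters, x ≠ invL y → StepOK S x p

instance (S) : Decidable (Hbase S) :=
  inferInstanceAs (Decidable (∀ x ∈ letters, RedW (S.img x) ∧ S.img x ≠ [] ∧ specOK S x (S.img x)))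
instance (S) : Decidable (Hstep S) :=
  inferInstanceAs (Decidable (∀ y ∈ letters, ∀ p ∈ S.spec y, ∀ x ∈ letters, x ≠ invL y → StepOK S x p))

lemma step_good (S : Subst) (hb : Hbase S) (hs : Hstep S) {x y : L3} {v : List L3}
    (hxy : x ≠ invL y) (hv : Good S y v) : Good S x (combine (S.img x) v) := by
  obtain ⟨hred, hne, hspec⟩ := hv
  rcases hspec with hex | ⟨p, hp, hpre, htag⟩
  · exact (hs y (letters_complete y) v hex x (letters_complete x) hxy).1
  · obtain ⟨t, ht⟩ := hpre
    rcases p with _ | ⟨h, pt⟩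
    · rcases htag with h2 | ⟨h', hh', -⟩
      · simp at h2
      · exact absurd hh' (by simp)
    subst ht
    have hstep := hs y (letters_complete y) (h :: pt) hp x (letters_complete x) hxy
    have hstep2 := hstep.2 h rfl
    by_cases hc : (S.img x).getLast? = some (invL h)
    · -- cancellation case
      rw [if_pos hc] at hstep2
      have hcmb : combine (S.img x) (h :: pt ++ t) = (S.img x).dropLast ++ (pt ++ t) := by
        rw [show (h :: pt ++ t) = h :: (pt ++ t) from rfl, combine_cons, if_pos hc]
      rcases htag with hlen | ⟨h', hh', hsafe⟩
      · -- p has length ≥ 2, so pt ≠ []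
        have hpt : pt ≠ [] := by
          rcases pt with _ | _
          · simp at hlen
          · simp
        obtain ⟨hjunc, hspre⟩ := hstep2 hpt
        refine ⟨?_, ?_, ?_⟩
        · rw [hcmb]
          unfold RedW
          rw [List.isChain_append]
          refine ⟨(hb x (letters_complete x)).1.prefix (List.dropLast_prefix _), hred.tail, ?_⟩
          intro l hl y2 hy2
          rcases pt with _ | ⟨pth, ptt⟩
          · exact absurd rfl hpt
          · simp only [List.cons_append, List.head?_cons, Option.mem_def,
              Option.some.injEq] at hy2
            subst hy2
            exact hjunc l hl pth rfl
        · rw [hcmb]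
          intro hcontra
          rcases List.append_eq_nil_iff.mp hcontra with ⟨-, h2⟩
          exact hpt (List.append_eq_nil_iff.mp h2).1
        · right
          obtain ⟨q, hq, hqpre, hqtag⟩ := hspre
          refine ⟨q, hq, ?_, hqtag⟩
          rw [hcmb, ← List.append_assoc]
          exact hqpre.trans (List.prefix_append _ _)
      · have e1 : h = h' := by simpa using congrArg List.head? hh'
        rw [← e1] at hsafe
        exact absurd hc (hsafe x (letters_complete x) hxy)
    · -- no cancellation
      rw [if_neg hc] at hstep2
      have hcmb : combine (S.img x) (h :: pt ++ t) = S.img x ++ (h :: pt ++ t) := by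
        rw [show (h :: pt ++ t) = h :: (pt ++ t) from rfl, combine_cons, if_neg hc]
      refine ⟨?_, ?_, ?_⟩
      · rw [hcmb]
        unfold RedW
        rw [List.isChain_append]
        refine ⟨(hb x (letters_complete x)).1, hred, ?_⟩
        intro l hl y2 hy2
        simp only [List.cons_append, List.head?_cons, Option.mem_def, Option.some.injEq] at hy2
        subst hy2
        intro heq
        apply hc
        rw [heq, invL_invL]
        exact hl
      · rw [hcmb]
        simp only [ne_eq, List.append_eq_nil_iff, not_and]
        intro _ h2
        simp at h2
      · right
        obtain ⟨q, hq, hqpre, hqtag⟩ := hstep2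
        refine ⟨q, hq, ?_, hqtag⟩
        rw [hcmb]
        have : S.img x ++ (h :: pt ++ t) = (S.img x ++ (h :: pt)) ++ t := by
          simp [List.append_assoc]
        rw [this]
        exact hqpre.trans (List.prefix_append _ _)

lemma run_good (S : Subst) (hb : Hbase S) (hs : Hstep S) :
    ∀ (L : List L3) (x : L3), RedW (x :: L) → Good S x (run S (x :: L)) := by
  intro L
  induction L with
  | nil =>
    intro x _
    show Good S x (combine (S.img x) (run S []))
    show Good S x (combine (S.img x) [])
    rw [combine_nil]
    exact hb x (letters_complete x)
  | cons y L'' ih =>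
    intro x hredxL
    have hxy : x ≠ invL y := by
      have h1 := (List.isChain_cons_cons.mp hredxL).1
      intro he
      rw [he] at h1
      simp [invL_invL] at h1
    exact step_good S hb hs hxy (ih y hredxL.tail)


open FreeGroup in
lemma mk_combine (u v : List L3) :
    FreeGroup.mk (combine u v) = FreeGroup.mk u * FreeGroup.mk v := by
  rcases v with _ | ⟨h, t⟩
  · rw [combine_nil, ← FreeGroup.one_eq_mk, mul_one]
  · rw [combine_cons]
    by_cases hc : u.getLast? = some (invL h)
    · rw [if_pos hc]
      have hu : u.dropLast ++ [invL h] = u := List.dropLast_append_getLast? _ hc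
      have step : FreeGroup.Red.Step (u.dropLast ++ ((h.1, !h.2) :: (h.1, h.2) :: t))
          (u.dropLast ++ t) := by
        simpa using (FreeGroup.Red.Step.not_rev (L₁ := u.dropLast) (L₂ := t) (x := h.1) (b := h.2))
      have e1 : FreeGroup.mk (u.dropLast ++ ((h.1, !h.2) :: (h.1, h.2) :: t)) =
          FreeGroup.mk (u.dropLast ++ t) := Quot.sound step
      calc FreeGroup.mk (u.dropLast ++ t)
          = FreeGroup.mk (u.dropLast ++ ((h.1, !h.2) :: (h.1, h.2) :: t)) := e1.symm
        _ = FreeGroup.mk ((u.dropLast ++ [invL h]) ++ (h :: t)) := by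
              simp [invL, List.append_assoc]
        _ = FreeGroup.mk u * FreeGroup.mk (h :: t) := by rw [hu, ← FreeGroup.mul_mk]
    · rw [if_neg hc, ← FreeGroup.mul_mk]

def homOf (S : Subst) : FreeGroup (Fin 3) →* FreeGroup (Fin 3) :=
  FreeGroup.lift (fun i => FreeGroup.mk (S.img (i, true)))

def Hinv (S : Subst) : Prop :=
  ∀ i ∈ ([0, 1, 2] : List (Fin 3)), S.img (i, false) = FreeGroup.invRev (S.img (i, true))

instance (S) : Decidable (Hinv S) :=
  inferInstanceAs (Decidable (∀ i ∈ ([0, 1, 2] : List (Fin 3)),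
    S.img (i, false) = FreeGroup.invRev (S.img (i, true))))

lemma Hinv.app {S : Subst} (h : Hinv S) (i : Fin 3) :
    S.img (i, false) = FreeGroup.invRev (S.img (i, true)) := by
  apply h
  fin_cases i <;> simp

lemma homOf_single (S : Subst) (hinv : Hinv S) (x : L3) :
    homOf S (FreeGroup.mk [x]) = FreeGroup.mk (S.img x) := by
  rcases x with ⟨i, b⟩
  cases b
  · have h1 : FreeGroup.mk [((i, false) : L3)] = (FreeGroup.of i)⁻¹ := by
      rw [FreeGroup.of, FreeGroup.inv_mk]
      congr 1
    rw [h1, map_inv]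
    have h2 : homOf S (FreeGroup.of i) = FreeGroup.mk (S.img (i, true)) := FreeGroup.lift_apply_of
    rw [h2, FreeGroup.inv_mk, hinv.app i]
  · have h2 : homOf S (FreeGroup.of i) = FreeGroup.mk (S.img (i, true)) := FreeGroup.lift_apply_of
    exact h2

lemma run_mk (S : Subst) (hinv : Hinv S) :
    ∀ L : List L3, FreeGroup.mk (run S L) = homOf S (FreeGroup.mk L) := by
  intro L
  induction L with
  | nil =>
    show FreeGroup.mk [] = homOf S (FreeGroup.mk [])
    rw [← FreeGroup.one_eq_mk, map_one]
  | cons x L ih =>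
    show FreeGroup.mk (combine (S.img x) (run S L)) = _
    rw [mk_combine, ih]
    have : FreeGroup.mk (x :: L) = FreeGroup.mk [x] * FreeGroup.mk L := by
      rw [FreeGroup.mul_mk]; rfl
    rw [this, map_mul, homOf_single S hinv]

lemma redW_reduce (L : List L3) : RedW (FreeGroup.reduce L) := by
  induction L with
  | nil => simp [RedW]
  | cons x L ih =>
    rw [FreeGroup.reduce.cons]
    rcases h : FreeGroup.reduce L with _ | ⟨hd, tl⟩
    · simp [RedW]
    · rw [h] at ih
      dsimp only
      by_cases hx : x.1 = hd.1 ∧ x.2 = !hd.2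
      · rw [if_pos hx]; exact ih.tail
      · rw [if_neg hx]
        refine List.isChain_cons_cons.mpr ⟨?_, ih⟩
        intro he
        apply hx
        rw [he]
        exact ⟨rfl, by simp [invL]⟩

lemma reduce_eq_self {L : List L3} (h : RedW L) : FreeGroup.reduce L = L := by
  induction L with
  | nil => rfl
  | cons x L ih =>
    have hL := ih h.tail
    rw [FreeGroup.reduce.cons, hL]
    rcases L with _ | ⟨hd, tl⟩
    · rfl
    · dsimp only
      rw [if_neg ?_]
      intro hx
      have h1 := (List.isChain_cons_cons.mp h).1
      apply h1
      rcases x with ⟨x1, x2⟩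
      rcases hd with ⟨h1', h2'⟩
      obtain ⟨e1, e2⟩ := hx
      simp only [invL]
      dsimp at e1 e2
      subst e1
      rw [e2]
      simp

lemma toWord_mk_redW {L : List L3} (h : RedW L) : (FreeGroup.mk L).toWord = L := by
  rw [FreeGroup.toWord_mk, reduce_eq_self h]

lemma redW_toWord (g : FreeGroup (Fin 3)) : RedW g.toWord := by
  rw [← FreeGroup.reduce_toWord]; exact redW_reduce _

lemma good_head {S : Subst} {y : L3} {v : List L3} {c : L3} (hgood : Good S y v)
    (hhead : ∀ p ∈ S.spec y, p.head? = some c) : v.head? = some c := by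
  obtain ⟨-, -, hspec⟩ := hgood
  rcases hspec with hex | ⟨p, hp, hpre, -⟩
  · exact hhead v hex
  · have hph := hhead p hp
    obtain ⟨t, ht⟩ := hpre
    rcases p with _ | ⟨a, p'⟩
    · simp at hph
    · rw [← ht]
      simpa using hph

lemma head?_invRev (L : List L3) :
    (FreeGroup.invRev L).head? = L.getLast?.map invL := by
  unfold FreeGroup.invRev
  rw [List.head?_reverse, List.getLast?_map]
  rfl

theorem qw_hom_head (S : Subst) (hb : Hbase S) (hs : Hstep S) (hinv : Hinv S)
    (hhead : ∀ p ∈ S.spec ((0, true) : L3), p.head? = some ((0, true) : L3))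
    {g : FreeGroup (Fin 3)} (hg : (g.toWord).head? = some ((0, true) : L3)) :
    ((homOf S g).toWord).head? = some ((0, true) : L3) := by
  rcases hL : g.toWord with _ | ⟨x, L'⟩
  · rw [hL] at hg; simp at hg
  · have hx : x = ((0, true) : L3) := by rw [hL] at hg; simpa using hg
    have hred : RedW (x :: L') := by rw [← hL]; exact redW_toWord g
    have hgood := run_good S hb hs L' x hred
    have he : homOf S g = FreeGroup.mk (run S (x :: L')) := by
      rw [run_mk S hinv, ← hL, FreeGroup.mk_toWord]
    rw [he, toWord_mk_redW hgood.1]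
    subst hx
    exact good_head hgood hhead

def QW (g : FreeGroup (Fin 3)) : Prop :=
  g.toWord.head? = some ((0, true) : L3) ∧ g.toWord.getLast? = some ((0, false) : L3)

theorem qw_hom (S : Subst) (hb : Hbase S) (hs : Hstep S) (hinv : Hinv S)
    (hhead : ∀ p ∈ S.spec ((0, true) : L3), p.head? = some ((0, true) : L3))
    {g : FreeGroup (Fin 3)} (hg : QW g) : QW (homOf S g) := by
  refine ⟨qw_hom_head S hb hs hinv hhead hg.1, ?_⟩
  have h2 : ((g⁻¹).toWord).head? = some ((0, true) : L3) := by
    rw [FreeGroup.toWord_inv, head?_invRev, hg.2]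
    rfl
  have h3 := qw_hom_head S hb hs hinv hhead (g := g⁻¹) h2
  rw [map_inv, FreeGroup.toWord_inv, head?_invRev] at h3
  rcases e : (homOf S g).toWord.getLast? with _ | l
  · rw [e] at h3; simp at h3
  · rw [e] at h3
    simp only [Option.map_some, Option.some.injEq] at h3
    have : l = invL ((0, true) : L3) := by rw [← h3, invL_invL]
    rw [this]
    rfl

-- letters: a=(0,t) A=(0,f) b=(1,t) B=(1,f) c=(2,t) C=(2,f)
def S1 : Subst where
  img := fun x =>
    if x = (0,true) then [(0,true),(1,true),(0,false)] else
    if x = (0,false) then [(0,true),(1,false),(0,false)] else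
    if x = (1,true) then [(0,true)] else
    if x = (1,false) then [(0,false)] else
    if x = (2,true) then [(2,true)] else [(2,false)]
  spec := fun x =>
    if x = (0,true) then [[(0,true),(1,true)]] else
    if x = (0,false) then [[(0,true),(1,false)]] else
    if x = (1,true) then [[(0,true)], [(0,true),(0,true)], [(0,true),(2,true)], [(0,true),(2,false)]] else
    if x = (1,false) then [[(0,false)], [(0,false),(1,true)], [(0,false),(1,false)], [(0,false),(0,false)], [(0,false),(2,true)], [(0,false),(2,false)], [(1,true)], [(1,false)]] else
    if x = (2,true) then [[(2,true)]] else [[(2,false)]]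

def S2 : Subst where
  img := fun x =>
    if x = (0,true) then [(0,true)] else
    if x = (0,false) then [(0,false)] else
    if x = (1,true) then [(1,true),(2,true),(1,false)] else
    if x = (1,false) then [(1,true),(2,false),(1,false)] else
    if x = (2,true) then [(1,true)] else [(1,false)]
  spec := fun x =>
    if x = (0,true) then [[(0,true)],[(0,true),(0,true)],[(0,true),(1,true)],[(0,true),(1,false)],[(0,true),(2,true)],[(0,true),(2,false)]] else
    if x = (0,false) then [[(0,false)],[(0,false),(0,false)],[(0,false),(1,true)],[(0,false),(1,false)],[(0,false),(2,true)],[(0,false),(2,false)]] else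
    if x = (1,true) then [[(1,true),(2,true)]] else
    if x = (1,false) then [[(1,true),(2,false)]] else
    if x = (2,true) then [[(1,true)],[(1,true),(0,true)],[(1,true),(0,false)],[(1,true),(1,true)]] else
    [[(1,false)],[(1,false),(0,true)],[(1,false),(0,false)],[(1,false),(1,false)],[(2,true)],[(2,false)]]

def S3 : Subst where
  img := fun x =>
    if x = (0,true) then [(0,true)] else
    if x = (0,false) then [(0,false)] else
    if x = (1,true) then [(2,true)] else
    if x = (1,false) then [(2,false)] else
    if x = (2,true) then [(2,false),(1,true),(2,true)] else [(2,false),(1,false),(2,true)]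
  spec := fun x =>
    if x = (0,true) then [[(0,true)],[(0,true),(0,true)],[(0,true),(2,true)],[(0,true),(1,true)],[(0,true),(1,false)],[(0,true),(2,false)]] else
    if x = (0,false) then [[(0,false)],[(0,false),(0,false)],[(0,false),(2,true)],[(0,false),(1,true)],[(0,false),(1,false)],[(0,false),(2,false)]] else
    if x = (1,true) then [[(2,true)],[(2,true),(0,true)],[(2,true),(0,false)],[(2,true),(2,true)],[(2,true),(1,true)],[(2,true),(1,false)],[(1,true)],[(1,false)]] else
    if x = (1,false) then [[(2,false)],[(2,false),(0,true)],[(2,false),(0,false)],[(2,false),(2,false)]] else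
    if x = (2,true) then [[(2,false),(1,true)]] else [[(2,false),(1,false)]]


-- inverse of S1 (Artin sigma1^{-1}): a -> b, b -> b^-1 a b, c -> c
def S1i : Subst where
  img := fun x =>
    if x = (0,true) then [(1,true)] else
    if x = (0,false) then [(1,false)] else
    if x = (1,true) then [(1,false),(0,true),(1,true)] else
    if x = (1,false) then [(1,false),(0,false),(1,true)] else
    if x = (2,true) then [(2,true)] else [(2,false)]
  spec := fun _ => []

lemma hbase1 : Hbase S1 := by decide
lemma hstep1 : Hstep S1 := by decide
lemma hinv1 : Hinv S1 := by decide
lemma hhead1 : ∀ p ∈ S1.spec ((0,true) : L3), p.head? = some ((0,true) : L3) := by decide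
lemma hbase2 : Hbase S2 := by decide
lemma hstep2 : Hstep S2 := by decide
lemma hinv2 : Hinv S2 := by decide
lemma hhead2 : ∀ p ∈ S2.spec ((0,true) : L3), p.head? = some ((0,true) : L3) := by decide
lemma hbase3 : Hbase S3 := by decide
lemma hstep3 : Hstep S3 := by decide
lemma hinv3 : Hinv S3 := by decide
lemma hhead3 : ∀ p ∈ S3.spec ((0,true) : L3), p.head? = some ((0,true) : L3) := by decide

lemma hinv1i : Hinv S1i := by decide

lemma homOf_of (S : Subst) (i : Fin 3) :
    homOf S (FreeGroup.of i) = FreeGroup.mk (S.img (i, true)) := FreeGroup.lift_apply_of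

-- composition identities to build automorphisms
lemma comp_S1a : (homOf S1i).comp (homOf S1) = MonoidHom.id _ := by
  apply FreeGroup.ext_hom
  intro i
  rw [MonoidHom.comp_apply, MonoidHom.id_apply, homOf_of, ← run_mk _ hinv1i]
  fin_cases i <;> rfl

lemma comp_S1b : (homOf S1).comp (homOf S1i) = MonoidHom.id _ := by
  apply FreeGroup.ext_hom
  intro i
  rw [MonoidHom.comp_apply, MonoidHom.id_apply, homOf_of, ← run_mk _ hinv1]
  fin_cases i <;> rfl

lemma comp_S23a : (homOf S3).comp (homOf S2) = MonoidHom.id _ := by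
  apply FreeGroup.ext_hom
  intro i
  rw [MonoidHom.comp_apply, MonoidHom.id_apply, homOf_of, ← run_mk _ hinv3]
  fin_cases i <;> rfl

lemma comp_S23b : (homOf S2).comp (homOf S3) = MonoidHom.id _ := by
  apply FreeGroup.ext_hom
  intro i
  rw [MonoidHom.comp_apply, MonoidHom.id_apply, homOf_of, ← run_mk _ hinv2]
  fin_cases i <;> rfl

/-- Artin automorphism for sigma_1 (acting as our "A1"). -/
def aut1 : MulAut (FreeGroup (Fin 3)) :=
  MonoidHom.toMulEquiv (homOf S1) (homOf S1i) comp_S1a comp_S1b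

/-- Artin automorphism "A2". -/
def aut2 : MulAut (FreeGroup (Fin 3)) :=
  MonoidHom.toMulEquiv (homOf S2) (homOf S3) comp_S23a comp_S23b

-- braid relation: aut2 * aut1 * aut2 = aut1 * aut2 * aut1  (as MulAut, (f*g) x = f (g x))
lemma braid_rel_aut : aut2 * aut1 * aut2 = aut1 * aut2 * aut1 := by
  apply MulEquiv.toMonoidHom_injective
  apply FreeGroup.ext_hom
  intro i
  show (homOf S2) ((homOf S1) ((homOf S2) (FreeGroup.of i))) =
    (homOf S1) ((homOf S2) ((homOf S1) (FreeGroup.of i)))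
  rw [homOf_of, homOf_of, ← run_mk _ hinv2, ← run_mk _ hinv1, ← run_mk _ hinv1,
    ← run_mk _ hinv2]
  fin_cases i <;> rfl


/-! ### The representation of B3 on the free group F3, and Property A -/

lemma rho_rel : ∀ r ∈ grpRels, FreeGroup.lift
    (fun i : Fin 2 => if i = 0 then aut2 else aut1) r = 1 := by
  intro r hr
  have hr' : r = FreeGroup.of 0 * FreeGroup.of 1 * FreeGroup.of 0 *
      (FreeGroup.of 1 * FreeGroup.of 0 * FreeGroup.of 1)⁻¹ := hr
  subst hr'
  simp only [map_mul, map_inv, FreeGroup.lift_apply_of]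
  norm_num
  rw [show aut1⁻¹ * (aut2⁻¹ * aut1⁻¹) = (aut1 * aut2 * aut1)⁻¹ by group, mul_inv_eq_one]
  exact braid_rel_aut

/-- The representation of B3 by automorphisms of the free group F3. -/
def rho : B3 →* MulAut (FreeGroup (Fin 3)) :=
  PresentedGroup.toGroup rho_rel

lemma rho_g0 : rho (g 0) = aut2 := by
  show PresentedGroup.toGroup rho_rel (PresentedGroup.of 0) = aut2
  rw [PresentedGroup.toGroup.of]
  simp

lemma rho_g1 : rho (g 1) = aut1 := by
  show PresentedGroup.toGroup rho_rel (PresentedGroup.of 1) = aut1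
  rw [PresentedGroup.toGroup.of]
  simp

lemma aut1_apply (x : FreeGroup (Fin 3)) : aut1 x = homOf S1 x := rfl
lemma aut2_apply (x : FreeGroup (Fin 3)) : aut2 x = homOf S2 x := rfl
lemma aut2_inv_apply (x : FreeGroup (Fin 3)) : aut2⁻¹ x = homOf S3 x := rfl

lemma evalSW_cons (l : Fin 2 × Bool) (w : List (Fin 2 × Bool)) :
    evalSW (l :: w) = (if l.2 then g l.1 else (g l.1)⁻¹) * evalSW w := by
  unfold evalSW
  rw [List.map_cons, List.prod_cons]

lemma rho_fix (w : List (Fin 2 × Bool)) (h : ∀ l ∈ w, l.1 = (0 : Fin 2)) :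
    rho (evalSW w) (FreeGroup.of 0) = FreeGroup.of 0 := by
  induction w with
  | nil =>
    show rho (evalSW []) (FreeGroup.of 0) = FreeGroup.of 0
    unfold evalSW
    rw [List.map_nil, List.prod_nil, map_one]
    rfl
  | cons l w' ih =>
    rw [evalSW_cons, map_mul, MulAut.mul_apply, ih (fun l hl => h l (List.mem_cons_of_mem _ hl))]
    have h0 : l.1 = 0 := h l (List.mem_cons_self)
    rcases l with ⟨i, b⟩
    dsimp at h0 ⊢
    subst h0
    cases b
    · rw [if_neg (by simp), map_inv, rho_g0, aut2_inv_apply]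
      rfl
    · rw [if_pos rfl, rho_g0, aut2_apply]
      rfl

lemma qw_eval (w : List (Fin 2 × Bool)) (hmem : ((1 : Fin 2), true) ∈ w)
    (hneg : ((1 : Fin 2), false) ∉ w) :
    QW (rho (evalSW w) (FreeGroup.of 0)) := by
  induction w with
  | nil => simp at hmem
  | cons l w' ih =>
    have hneg' : ((1 : Fin 2), false) ∉ w' := fun hc => hneg (List.mem_cons_of_mem _ hc)
    have hlne : l ≠ ((1 : Fin 2), false) := fun hc => hneg (by rw [← hc]; exact List.mem_cons_self)
    rw [evalSW_cons, map_mul, MulAut.mul_apply]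
    by_cases hw' : ((1 : Fin 2), true) ∈ w'
    · have hq := ih hw' hneg'
      have hcases : l = ((0 : Fin 2), true) ∨ l = ((0 : Fin 2), false) ∨
          l = ((1 : Fin 2), true) ∨ l = ((1 : Fin 2), false) := by
        rcases l with ⟨i, b⟩
        fin_cases i <;> cases b <;> simp
      rcases hcases with rfl | rfl | rfl | rfl
      · rw [if_pos rfl, rho_g0, aut2_apply]
        exact qw_hom S2 hbase2 hstep2 hinv2 hhead2 hq
      · rw [if_neg (by simp), map_inv, rho_g0, aut2_inv_apply]
        exact qw_hom S3 hbase3 hstep3 hinv3 hhead3 hq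
      · rw [if_pos rfl, rho_g1, aut1_apply]
        exact qw_hom S1 hbase1 hstep1 hinv1 hhead1 hq
      · exact absurd rfl hlne
    · have hl : l = ((1 : Fin 2), true) := by
        rcases List.mem_cons.mp hmem with h1 | h2
        · exact h1.symm
        · exact absurd h2 hw'
      subst hl
      have hfix : rho (evalSW w') (FreeGroup.of 0) = FreeGroup.of 0 := by
        apply rho_fix
        intro l2 hl2
        rcases l2 with ⟨i, b⟩
        fin_cases i
        · rfl
        · cases b
          · exact absurd hl2 hneg'
          · exact absurd hl2 hw'
      rw [hfix, if_pos rfl, rho_g1, aut1_apply]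
      constructor
      · rw [homOf_of, toWord_mk_redW (by decide)]
        rfl
      · rw [homOf_of, toWord_mk_redW (by decide)]
        rfl

/-- The exponent-sum homomorphism from B3 to ℤ. -/
def expSum : B3 →* Multiplicative ℤ :=
  PresentedGroup.toGroup (f := fun _ : Fin 2 => Multiplicative.ofAdd 1) (by
    intro r hr
    have hr' : r = FreeGroup.of 0 * FreeGroup.of 1 * FreeGroup.of 0 *
        (FreeGroup.of 1 * FreeGroup.of 0 * FreeGroup.of 1)⁻¹ := hr
    subst hr'
    simp only [map_mul, map_inv, FreeGroup.lift_apply_of]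
    group)

lemma expSum_g (i : Fin 2) : expSum (g i) = Multiplicative.ofAdd 1 := by
  show PresentedGroup.toGroup _ (PresentedGroup.of i) = _
  rw [PresentedGroup.toGroup.of]

lemma expSum_all_pos (w : List (Fin 2 × Bool)) (h : ∀ l ∈ w, l = ((0 : Fin 2), true)) :
    expSum (evalSW w) = Multiplicative.ofAdd (w.length : ℤ) := by
  induction w with
  | nil =>
    unfold evalSW
    rw [List.map_nil, List.prod_nil, map_one]
    rfl
  | cons l w' ih =>
    rw [evalSW_cons, map_mul, ih (fun l hl => h l (List.mem_cons_of_mem _ hl))]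
    have hl : l = ((0 : Fin 2), true) := h l (List.mem_cons_self)
    subst hl
    rw [if_pos rfl, expSum_g]
    rw [← ofAdd_add]
    congr 1
    simp only [List.length_cons]
    push_cast
    ring

/-- Property A: a sigma-positive word does not represent the trivial braid. -/
theorem sigmaPos_ne_one {w : List (Fin 2 × Bool)} (h : SigmaPos w) : evalSW w ≠ 1 := by
  obtain ⟨i, hmem, hneg, hbound⟩ := h
  intro he
  fin_cases i
  · -- i = 0 : all letters are (0, true)
    have hall : ∀ l ∈ w, l = ((0 : Fin 2), true) := by
      intro l hl
      rcases l with ⟨j, b⟩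
      have hj : j = 0 := Fin.le_zero_iff.mp (hbound _ hl)
      subst hj
      cases b
      · exact absurd hl hneg
      · rfl
    have h1 := expSum_all_pos w hall
    rw [he, map_one] at h1
    have h2 : (0 : ℤ) = (w.length : ℤ) := by
      have := congrArg Multiplicative.toAdd h1
      simpa using this
    have h3 : w ≠ [] := by rintro rfl; simp at hmem
    have h4 : 0 < w.length := List.length_pos_iff.mpr h3
    omega
  · -- i = 1
    have hq := qw_eval w hmem hneg
    rw [he, map_one] at hq
    have : QW (FreeGroup.of (0 : Fin 3)) := hq
    obtain ⟨-, h2⟩ := this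
    rw [FreeGroup.toWord_of] at h2
    simp at h2

/-! ### The braid order: transitivity and irreflexivity -/

lemma evalSW_append (w1 w2 : List (Fin 2 × Bool)) :
    evalSW (w1 ++ w2) = evalSW w1 * evalSW w2 := by
  unfold evalSW
  rw [List.map_append, List.prod_append]

lemma sigmaPos_append {w1 w2 : List (Fin 2 × Bool)} (h1 : SigmaPos w1) (h2 : SigmaPos w2) :
    SigmaPos (w1 ++ w2) := by
  obtain ⟨i1, m1, n1, b1⟩ := h1
  obtain ⟨i2, m2, n2, b2⟩ := h2
  rcases le_total i1 i2 with hle | hle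
  · refine ⟨i2, List.mem_append_right _ m2, ?_, ?_⟩
    · intro hc
      rcases List.mem_append.mp hc with hc1 | hc2
      · rcases lt_or_eq_of_le hle with hlt | heq
        · exact absurd (b1 _ hc1) (not_le.mpr hlt)
        · exact n1 (heq ▸ hc1)
      · exact n2 hc2
    · intro l hl
      rcases List.mem_append.mp hl with hc1 | hc2
      · exact le_trans (b1 _ hc1) hle
      · exact b2 _ hc2
  · refine ⟨i1, List.mem_append_left _ m1, ?_, ?_⟩
    · intro hc
      rcases List.mem_append.mp hc with hc1 | hc2
      · exact n1 hc1
      · rcases lt_or_eq_of_le hle with hlt | heq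
        · exact absurd (b2 _ hc2) (not_le.mpr hlt)
        · exact n2 (heq ▸ hc2)
    · intro l hl
      rcases List.mem_append.mp hl with hc1 | hc2
      · exact b1 _ hc1
      · exact le_trans (b2 _ hc2) hle

lemma gLt_trans {a b c : B3} (h1 : gLt a b) (h2 : gLt b c) : gLt a c := by
  obtain ⟨w1, hp1, he1⟩ := h1
  obtain ⟨w2, hp2, he2⟩ := h2
  refine ⟨w1 ++ w2, sigmaPos_append hp1 hp2, ?_⟩
  rw [evalSW_append, he1, he2]
  group

lemma gLt_irrefl (a : B3) : ¬ gLt a a := by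
  rintro ⟨w, hp, he⟩
  rw [inv_mul_cancel] at he
  exact sigmaPos_ne_one hp he

/-! ### Garside theory in the positive braid monoid -/

lemma mkw_append (u v : List (Fin 2)) : mkw (u ++ v) = mkw u * mkw v := by
  unfold mkw
  rw [← map_mul]
  rfl

lemma mkw_nil : mkw [] = 1 := by
  unfold mkw
  exact map_one _

lemma braid_word_rel : mkw [0, 1, 0] = mkw [1, 0, 1] := by
  unfold mkw
  show ((FreeMonoid.ofList [0, 1, 0] : FreeMonoid (Fin 2)) : braidCon.Quotient) =
    (FreeMonoid.ofList [1, 0, 1] : FreeMonoid (Fin 2))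
  rw [Con.eq]
  exact ConGen.Rel.of _ _ ⟨rfl, rfl⟩

def flip2 : Fin 2 → Fin 2 := fun i => if i = 0 then 1 else 0

lemma flip2_flip2 (i : Fin 2) : flip2 (flip2 i) = i := by fin_cases i <;> rfl

lemma delta_s (i : Fin 2) : Δ * mkw [i] = mkw [flip2 i] * Δ := by
  fin_cases i
  · show Δ * mkw [0] = mkw [1] * Δ
    unfold Δ
    rw [← mkw_append, ← mkw_append]
    show mkw ([0,1,0] ++ [0]) = mkw ([1] ++ [0,1,0])
    rw [show ([0,1,0] ++ [0] : List (Fin 2)) = [0,1,0,0] from rfl,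
        show ([1] ++ [0,1,0] : List (Fin 2)) = [1,0,1,0] from rfl]
    rw [show ([0,1,0,0] : List (Fin 2)) = [0,1,0] ++ [0] from rfl,
        show ([1,0,1,0] : List (Fin 2)) = [1,0,1] ++ [0] from rfl]
    rw [mkw_append, mkw_append, braid_word_rel]
  · show Δ * mkw [1] = mkw [0] * Δ
    unfold Δ
    rw [← mkw_append, ← mkw_append]
    rw [show ([0,1,0] ++ [1] : List (Fin 2)) = [0] ++ [1,0,1] from rfl]
    rw [mkw_append, mkw_append, braid_word_rel]

lemma delta_divides_step : ∀ (n : ℕ) (i : Fin 2), ∃ d, mkw [i] * Δ ^ n * d = Δ ^ (n + 1) := by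
  intro n
  induction n with
  | zero =>
    intro i
    fin_cases i
    · exact ⟨mkw [1, 0], by
        rw [pow_zero, pow_one, mul_one, ← mkw_append]
        rfl⟩
    · refine ⟨mkw [0, 1], ?_⟩
      rw [pow_zero, pow_one, mul_one, ← mkw_append]
      show mkw [1, 0, 1] = Δ
      unfold Δ
      exact braid_word_rel.symm
  | succ n ih =>
    intro i
    obtain ⟨d, hd⟩ := ih (flip2 i)
    refine ⟨d, ?_⟩
    have h1 : mkw [i] * Δ ^ (n + 1) = Δ * (mkw [flip2 i] * Δ ^ n) := by
      rw [pow_succ']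
      rw [← mul_assoc, ← mul_assoc]
      congr 1
      have := delta_s (flip2 i)
      rw [flip2_flip2] at this
      exact this.symm
    rw [h1, mul_assoc, hd, ← pow_succ']

lemma word_divides_delta_pow (w : List (Fin 2)) : ∃ c, mkw w * c = Δ ^ w.length := by
  induction w with
  | nil => exact ⟨1, by simp [mkw_nil]⟩
  | cons i w' ih =>
    obtain ⟨c, hc⟩ := ih
    obtain ⟨d, hd⟩ := delta_divides_step w'.length i
    refine ⟨c * d, ?_⟩
    have h1 : mkw (i :: w') = mkw [i] * mkw w' := by
      rw [← mkw_append]; rfl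
    rw [h1]
    calc mkw [i] * mkw w' * (c * d) = mkw [i] * (mkw w' * c) * d := by
          rw [mul_assoc, mul_assoc, mul_assoc]
      _ = mkw [i] * Δ ^ w'.length * d := by rw [hc]
      _ = Δ ^ (w'.length + 1) := hd
      _ = Δ ^ (i :: w').length := by rw [List.length_cons]

/-- The length homomorphism on the positive braid monoid. -/
def lenH : B3P →* Multiplicative ℕ :=
  Con.lift _ (FreeMonoid.lift fun _ : Fin 2 => Multiplicative.ofAdd 1) (by
    apply Con.conGen_le.mpr
    rintro u v ⟨hu, hv⟩
    subst hu; subst hv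
    rw [Con.ker_rel]
    simp only [map_mul, FreeMonoid.lift_eval_of])

lemma lenH_mkw (w : List (Fin 2)) : lenH (mkw w) = Multiplicative.ofAdd w.length := by
  induction w with
  | nil => rw [mkw_nil, map_one]; rfl
  | cons i w' ih =>
    have h1 : mkw (i :: w') = mkw [i] * mkw w' := by rw [← mkw_append]; rfl
    rw [h1, map_mul, ih]
    have h2 : lenH (mkw [i]) = Multiplicative.ofAdd 1 := by
      show (FreeMonoid.lift fun _ : Fin 2 => Multiplicative.ofAdd 1) (FreeMonoid.of i) = _
      rw [FreeMonoid.lift_eval_of]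
    rw [h2, ← ofAdd_add]
    congr 1
    simp [List.length_cons]
    omega

lemma exists_word (b : B3P) : ∃ w : List (Fin 2), mkw w = b := by
  obtain ⟨x, hx⟩ := Con.mk'_surjective (c := braidCon) b
  exact ⟨FreeMonoid.toList x, by rw [mkw, FreeMonoid.ofList_toList, hx]⟩

/-- Every braid of complexity at most k has a representing word of length at most 3k. -/
lemma short_word_of_compl_le {b : B3P} {k : ℕ} (h : compl b ≤ k) :
    ∃ w : List (Fin 2), mkw w = b ∧ w.length ≤ 3 * k := by
  obtain ⟨w0, hw0⟩ := exists_word b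
  have hne : {ℓ | ∃ c, b * c = Δ ^ ℓ}.Nonempty := by
    obtain ⟨c, hc⟩ := word_divides_delta_pow w0
    exact ⟨w0.length, c, by rw [hw0] at hc; exact hc⟩
  have hmem : compl b ∈ {ℓ | ∃ c, b * c = Δ ^ ℓ} := Nat.sInf_mem hne
  obtain ⟨c, hc⟩ := hmem
  have hck : b * (c * Δ ^ (k - compl b)) = Δ ^ k := by
    rw [← mul_assoc, hc, ← pow_add]
    congr 1
    omega
  refine ⟨w0, hw0, ?_⟩
  obtain ⟨x, hx⟩ := exists_word (c * Δ ^ (k - compl b))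
  have h5 : lenH (mkw w0 * mkw x) = lenH (Δ ^ k) := by rw [hw0, hx, hck]
  rw [← mkw_append, lenH_mkw] at h5
  have h6 : lenH (Δ ^ k) = Multiplicative.ofAdd (3 * k) := by
    rw [map_pow]
    have h7 : lenH Δ = Multiplicative.ofAdd 3 := by
      show lenH (mkw [0, 1, 0]) = _
      rw [lenH_mkw]
      rfl
    rw [h7, ← ofAdd_nsmul]
    congr 1
    simp [smul_eq_mul]
    omega
  rw [h6] at h5
  have h8 : (w0 ++ x).length = 3 * k := Multiplicative.ofAdd.injective h5
  rw [List.length_append] at h8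
  omega

/-! ### Counting words -/

def enc : List (Fin 2) → ℕ :=
  fun w => w.foldr (fun i n => 2 * n + (i : ℕ)) 1

lemma enc_nil : enc [] = 1 := rfl

lemma enc_cons (i : Fin 2) (w : List (Fin 2)) : enc (i :: w) = 2 * enc w + (i : ℕ) := rfl

lemma enc_pos (w : List (Fin 2)) : 1 ≤ enc w := by
  induction w with
  | nil => exact le_refl 1
  | cons i w' ih => rw [enc_cons]; omega

lemma enc_lt (w : List (Fin 2)) : enc w < 2 ^ (w.length + 1) := by
  induction w with
  | nil => simp [enc_nil]
  | cons i w' ih =>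
    rw [enc_cons, List.length_cons]
    have hi : (i : ℕ) < 2 := i.isLt
    have : 2 ^ (w'.length + 1 + 1) = 2 * 2 ^ (w'.length + 1) := by ring
    omega

lemma enc_inj : ∀ w1 w2 : List (Fin 2), enc w1 = enc w2 → w1 = w2 := by
  intro w1
  induction w1 with
  | nil =>
    intro w2 h
    cases w2 with
    | nil => rfl
    | cons j w2' =>
      rw [enc_nil, enc_cons] at h
      have := enc_pos w2'
      omega
  | cons i w1' ih =>
    intro w2 h
    cases w2 with
    | nil =>
      rw [enc_nil, enc_cons] at h
      have := enc_pos w1'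
      omega
    | cons j w2' =>
      rw [enc_cons, enc_cons] at h
      have hi : (i : ℕ) < 2 := i.isLt
      have hj : (j : ℕ) < 2 := j.isLt
      have h1 : (i : ℕ) = (j : ℕ) := by omega
      have h2 : enc w1' = enc w2' := by omega
      have h3 := ih w2' h2
      have h4 : i = j := Fin.ext h1
      rw [h3, h4]

/-- A strictly descending sequence in B₃⁺ whose entries all have complexity at most k
has length less than 2^{3k+1}. -/
theorem descending_bounded_complexity (k m : ℕ) (bs : ℕ → B3P)
    (hdesc : ∀ t, t < m → blt (bs (t + 1)) (bs t))
    (hcompl : ∀ t, t ≤ m → compl (bs t) ≤ k) :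
    m < 2 ^ (3 * k + 1) := by
  have hchain : ∀ s t : ℕ, s < t → t ≤ m → gLt (ι (bs t)) (ι (bs s)) := by
    intro s t hst htm
    induction t with
    | zero => omega
    | succ t ih =>
      rcases Nat.lt_or_ge s t with h1 | h2
      · exact gLt_trans (hdesc t (by omega)) (ih h1 (by omega))
      · have hst' : s = t := by omega
        subst hst'
        exact hdesc s (by omega)
  have hinj : ∀ s t : ℕ, s ≤ m → t ≤ m → bs s = bs t → s = t := by
    intro s t hs ht he
    by_contra hne
    rcases Nat.lt_or_ge s t with h1 | h2
    · have hc := hchain s t h1 ht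
      rw [he] at hc
      exact gLt_irrefl _ hc
    · have h3 : t < s := by omega
      have hc := hchain t s h3 hs
      rw [he] at hc
      exact gLt_irrefl _ hc
  have Hw : ∀ t : Fin (m + 1), ∃ w : List (Fin 2), mkw w = bs t ∧ w.length ≤ 3 * k :=
    fun t => short_word_of_compl_le (hcompl t (by omega))
  choose wf hw1 hw2 using Hw
  have hpow : 2 ≤ 2 ^ (3 * k + 1) := by
    have h1 : 2 ^ 1 ≤ 2 ^ (3 * k + 1) := Nat.pow_le_pow_right (by norm_num) (by omega)
    simpa using h1
  have hF : ∀ t : Fin (m + 1), enc (wf t) - 1 < 2 ^ (3 * k + 1) - 1 := by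
    intro t
    have h1 := enc_lt (wf t)
    have h2 : 2 ^ ((wf t).length + 1) ≤ 2 ^ (3 * k + 1) :=
      Nat.pow_le_pow_right (by norm_num) (by have := hw2 t; omega)
    have h3 := enc_pos (wf t)
    omega
  have hFinj : Function.Injective (fun t : Fin (m + 1) =>
      (⟨enc (wf t) - 1, hF t⟩ : Fin (2 ^ (3 * k + 1) - 1))) := by
    intro t1 t2 he
    have h1 : enc (wf t1) - 1 = enc (wf t2) - 1 := congrArg Fin.val he
    have hp1 := enc_pos (wf t1)
    have hp2 := enc_pos (wf t2)
    have h2 : enc (wf t1) = enc (wf t2) := by omega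
    have h3 : wf t1 = wf t2 := enc_inj _ _ h2
    have h4 : bs t1 = bs t2 := by rw [← hw1 t1, ← hw1 t2, h3]
    exact Fin.ext (hinj t1 t2 (by omega) (by omega) h4)
  have hcard := Fintype.card_le_of_injective _ hFinj
  simp only [Fintype.card_fin] at hcard
  omega

end Braid3
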